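/- Let X be a compact geodesic space, f : X → ℝⁿ an ω-continuous function for a modulus of continuity ω, and P a finite geodesic ε-sample of X. Then for any δ ≥ ε, the persistence modules H_*(f) (persistent homology of the sublevel filtration of f) and H_*(O^δ(f|_P)) (persistent homology of the filtration x ↦ ⋃_{p∈P, f(p)≤x} B_X(p,δ)) are ordinarily ω(δ)-interleaved. -/

import Mathlib

open CategoryTheory Metric

/-- `ℝⁿ` as a poset (with the product order), viewed as a thin category. -/
def Rn (n : ℕ) : Type := Fin n → ℝ

instance (n : ℕ) : Preorder (Rn n) := inferInstanceAs (Preorder (Fin n → ℝ))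

/-- Translation of `ℝⁿ` by a vector `c`. -/
def shiftMap (n : ℕ) (c : Fin n → ℝ) : Rn n → Rn n := fun x => (fun i => x i + c i : Fin n → ℝ)

lemma shiftMap_monotone (n : ℕ) (c : Fin n → ℝ) : Monotone (shiftMap n c) :=
  fun _ _ h i => add_le_add (h i) (le_refl (c i))

/-- The `c`-shift functor on `ℝⁿ`. -/
def shiftFunctor (n : ℕ) (c : Fin n → ℝ) : Rn n ⥤ Rn n :=
  Monotone.functor (shiftMap_monotone n c)

/-- Two functors `F, G : ℝⁿ → C` are `c`-interleaved. -/
def Interleaved {C : Type*} [Category C] (n : ℕ) (c : Fin n → ℝ) (F G : Rn n ⥤ C) : Prop :=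
  ∃ (f : F ⟶ shiftFunctor n c ⋙ G) (g : G ⟶ shiftFunctor n c ⋙ F),
    (∀ (x : Rn n) (h : x ≤ shiftMap n c (shiftMap n c x)),
        f.app x ≫ g.app (shiftMap n c x) = F.map (homOfLE h)) ∧
    (∀ (x : Rn n) (h : x ≤ shiftMap n c (shiftMap n c x)),
        g.app x ≫ f.app (shiftMap n c x) = G.map (homOfLE h))

/-- The singular chain complex functor with coefficients in a field `K`. -/
noncomputable def singularChains (K : Type) [Field K] : TopCat ⥤ ChainComplex (ModuleCat K) ℕ :=
  TopCat.toSSet ⋙ ((SimplicialObject.whiskering _ _).obj (ModuleCat.free K)) ⋙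
    AlgebraicTopology.alternatingFaceMapComplex (ModuleCat K)

/-- Singular homology in degree `q`, with coefficients in a field `K`, as a functor. -/
noncomputable def singularHomologyFunctor (K : Type) [Field K] (q : ℕ) : TopCat ⥤ ModuleCat K :=
  singularChains K ⋙ HomologicalComplex.homologyFunctor _ _ q

variable {X : Type} [MetricSpace X] {n : ℕ}

/-- The sublevel-set filtration of `f : X → ℝⁿ`, as a functor `ℝⁿ ⥤ Top`. -/
def sublevelFiltration (f : X → (Fin n → ℝ)) : Rn n ⥤ TopCat where
  obj x := TopCat.of {y : X | f y ≤ (x : Fin n → ℝ)}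
  map {_ _} h := TopCat.ofHom ⟨Set.inclusion (fun _ hp => le_trans hp (leOfHom h)), continuous_inclusion _⟩
  map_id _ := rfl
  map_comp _ _ := rfl

/-- The function-offset filtration `O^δ(f|_P)`: at index `x` it is the union of the open
geodesic balls of radius `δ` centered at the points `p ∈ P` with `f p ≤ x`. -/
def offsetFiltration (f : X → (Fin n → ℝ)) (P : Finset X) (δ : ℝ) : Rn n ⥤ TopCat where
  obj x := TopCat.of (⋃ p ∈ {p : X | p ∈ P ∧ f p ≤ (x : Fin n → ℝ)}, ball p δ)
  map {_ _} h := TopCat.ofHom ⟨Set.inclusion (Set.biUnion_subset_biUnion_left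
      (fun _ hp => ⟨hp.1, le_trans hp.2 (leOfHom h)⟩)), continuous_inclusion _⟩
  map_id _ := rfl
  map_comp _ _ := rfl

/-- A metric space is geodesic if any two points are joined by a continuous shortest path,
parametrized by arclength, of length equal to their distance. -/
def IsGeodesicSpace (X : Type*) [MetricSpace X] : Prop :=
  ∀ x y : X, ∃ γ : ℝ → X, γ 0 = x ∧ γ (dist x y) = y ∧
    ∀ s ∈ Set.Icc (0 : ℝ) (dist x y), ∀ t ∈ Set.Icc (0 : ℝ) (dist x y),
      dist (γ s) (γ t) = |s - t|

/-- A modulus of continuity. -/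
def IsModulusOfContinuity (ω : ℝ → ℝ) : Prop :=
  (∀ t, 0 ≤ t → 0 ≤ ω t) ∧ MonotoneOn ω (Set.Ici 0) ∧
  (∀ s t, 0 ≤ s → 0 ≤ t → ω (s + t) ≤ ω s + ω t) ∧
  Filter.Tendsto ω (nhdsWithin 0 (Set.Ici 0)) (nhds 0)

set_option maxHeartbeats 2000000 in
/-- Let `X` be a compact geodesic space, `f : X → ℝⁿ` an `ω`-continuous function for a
modulus of continuity `ω`, and `P` a finite geodesic `ε`-sample of `X`.  Then for any
`δ ≥ ε`, the persistence modules `H_*(f)` (persistent homology of the sublevel filtration)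
and `H_*(O^δ(f|_P))` (persistent homology of the function-offset filtration) are ordinarily
`ω(δ)`-interleaved (interleaving in the diagonal direction `1 = (1,…,1)`). -/
theorem offset_estimator_interleaved [CompactSpace X] (hgeo : IsGeodesicSpace X)
    (K : Type) [Field K] (q : ℕ)
    (ω : ℝ → ℝ) (hω : IsModulusOfContinuity ω)
    (f : X → (Fin n → ℝ)) (hf : ∀ x y : X, ‖f x - f y‖ ≤ ω (dist x y))
    (P : Finset X) (ε : ℝ) (hε : 0 < ε)
    (hP : EMetric.hausdorffEdist (P : Set X) (Set.univ : Set X) < ENNReal.ofReal ε)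
    (δ : ℝ) (hδ : ε ≤ δ) :
    Interleaved n (fun _ => ω δ)
      (sublevelFiltration f ⋙ singularHomologyFunctor K q)
      (offsetFiltration f P δ ⋙ singularHomologyFunctor K q) := by
  classical
  set c : Fin n → ℝ := (fun _ => ω δ) with hc
  have hδ0 : (0:ℝ) ≤ δ := le_trans hε.le hδ
  have key1 : ∀ y : X, ∃ p ∈ P, dist y p < ε := by
    intro y
    have h1 : EMetric.infEdist y (P : Set X) < ENNReal.ofReal ε := by
      calc EMetric.infEdist y (P : Set X)
          ≤ EMetric.hausdorffEdist (Set.univ : Set X) (P : Set X) :=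
            EMetric.infEdist_le_hausdorffEdist_of_mem (Set.mem_univ y)
        _ = EMetric.hausdorffEdist (P : Set X) Set.univ := EMetric.hausdorffEdist_comm
        _ < _ := hP
    obtain ⟨p, hpP, hpd⟩ := EMetric.infEdist_lt_iff.mp h1
    exact ⟨p, hpP, by rwa [edist_lt_ofReal] at hpd⟩
  have comp : ∀ x y : X, dist x y ≤ δ → ∀ i, |f x i - f y i| ≤ ω δ := by
    intro x y hd i
    have h1 : |f x i - f y i| ≤ ‖f x - f y‖ := by
      have := norm_le_pi_norm (f x - f y) i
      simpa using this
    have h2 : ω (dist x y) ≤ ω δ :=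
      hω.2.1 (Set.mem_Ici.mpr dist_nonneg) (Set.mem_Ici.mpr hδ0) hd
    exact h1.trans ((hf x y).trans h2)
  have sub1 : ∀ x : Rn n, {y : X | f y ≤ (x : Fin n → ℝ)} ⊆
      ⋃ p ∈ {p : X | p ∈ P ∧ f p ≤ (shiftMap n c x : Fin n → ℝ)}, ball p δ := by
    intro x y hy
    obtain ⟨p, hpP, hpd⟩ := key1 y
    have hpdδ : dist y p < δ := lt_of_lt_of_le hpd hδ
    refine Set.mem_biUnion ⟨hpP, ?_⟩ ?_
    · intro i
      have := comp p y (by rw [dist_comm]; exact hpdδ.le) i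
      have h3 : f p i - f y i ≤ ω δ := (abs_le.mp this).2
      have h4 : f y i ≤ x i := hy i
      simpa [shiftMap, c] using by linarith
    · simpa [mem_ball] using hpdδ
  have sub2 : ∀ x : Rn n,
      (⋃ p ∈ {p : X | p ∈ P ∧ f p ≤ (x : Fin n → ℝ)}, ball p δ) ⊆
        {y : X | f y ≤ (shiftMap n c x : Fin n → ℝ)} := by
    intro x y hy
    simp only [Set.mem_iUnion] at hy
    obtain ⟨p, ⟨hpP, hpx⟩, hyp⟩ := hy
    intro i
    have hd : dist y p ≤ δ := (mem_ball.mp hyp).le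
    have := comp y p hd i
    have h3 : f y i - f p i ≤ ω δ := (abs_le.mp this).2
    have h4 : f p i ≤ x i := hpx i
    simpa [shiftMap, c] using by linarith
  let F := sublevelFiltration f
  let G := offsetFiltration f P δ
  let H := singularHomologyFunctor K q
  let η : F ⟶ shiftFunctor n c ⋙ G :=
    { app := fun x => TopCat.ofHom ⟨Set.inclusion (sub1 x), continuous_inclusion _⟩
      naturality := fun _ _ _ => rfl }
  let ζ : G ⟶ shiftFunctor n c ⋙ F :=
    { app := fun x => TopCat.ofHom ⟨Set.inclusion (sub2 x), continuous_inclusion _⟩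
      naturality := fun _ _ _ => rfl }
  refine ⟨CategoryTheory.Functor.whiskerRight η H, CategoryTheory.Functor.whiskerRight ζ H, ?_, ?_⟩
  · intro x h
    show H.map (η.app x) ≫ H.map (ζ.app (shiftMap n c x)) = H.map (F.map (homOfLE h))
    erw [← H.map_comp]
    congr 1
  · intro x h
    show H.map (ζ.app x) ≫ H.map (η.app (shiftMap n c x)) = H.map (G.map (homOfLE h))
    erw [← H.map_comp]
    congr 1
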